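/- The quartic/linear interpolation kernel S¹_{4/1} with parameters a₀₁ > -1 and a₀₂ is C¹ continuous on ℝ, and its derivative at t = 1 equals 0. -/

import Mathlib

open Set Filter

noncomputable def S41a (a1 a2 t : ℝ) : ℝ :=
  if |t| < 1 then
    (1 - |t|) ^ 2 * (1 + (2 + a1) * |t| + (3 + 2 * a1 + a2) * |t| ^ 2) / (1 + a1 * |t|)
  else if |t| < 2 then
    (2 - |t|) ^ 2 * (1 - |t|) ^ 2 * (3 + a2) / (-1 - 2 * a1 + a1 * |t|)
  else 0

noncomputable def dA (a1 a2 t : ℝ) : ℝ :=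
  ((-2 * (1 - t)) * (1 + (2 + a1) * t + (3 + 2 * a1 + a2) * t ^ 2)
      + (1 - t) ^ 2 * ((2 + a1) + (3 + 2 * a1 + a2) * (2 * t))) / (1 + a1 * t)
    - (1 - t) ^ 2 * (1 + (2 + a1) * t + (3 + 2 * a1 + a2) * t ^ 2) * a1 / (1 + a1 * t) ^ 2

noncomputable def dB (a1 a2 t : ℝ) : ℝ :=
  ((-2 * (2 - t)) * (1 - t) ^ 2 + (2 - t) ^ 2 * (-2 * (1 - t))) * (3 + a2) / (-1 - 2 * a1 + a1 * t)
    - (2 - t) ^ 2 * (1 - t) ^ 2 * (3 + a2) * a1 / (-1 - 2 * a1 + a1 * t) ^ 2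

noncomputable def D0 (a1 a2 t : ℝ) : ℝ :=
  if t < 1 then dA a1 a2 t else if t < 2 then dB a1 a2 t else 0

noncomputable def Dfun (a1 a2 t : ℝ) : ℝ :=
  if t < 0 then -(D0 a1 a2 (-t)) else D0 a1 a2 t

lemma dA_zero (a1 a2 : ℝ) : dA a1 a2 0 = 0 := by norm_num [dA]

lemma dA_one (a1 a2 : ℝ) : dA a1 a2 1 = 0 := by norm_num [dA]

lemma dB_one (a1 a2 : ℝ) : dB a1 a2 1 = 0 := by norm_num [dB]

lemma dB_two (a1 a2 : ℝ) : dB a1 a2 2 = 0 := by norm_num [dB]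

lemma qA_pos (a1 t : ℝ) (ha1 : -1 < a1) (h0 : 0 ≤ t) (h1 : t ≤ 1) : 0 < 1 + a1 * t := by
  rcases eq_or_lt_of_le h1 with rfl | h1
  · linarith
  · nlinarith [mul_nonneg h0 (by linarith : (0:ℝ) ≤ 1 + a1)]

lemma qB_neg (a1 t : ℝ) (ha1 : -1 < a1) (h1 : 1 ≤ t) (h2 : t ≤ 2) :
    -1 - 2 * a1 + a1 * t < 0 := by
  rcases eq_or_lt_of_le h2 with rfl | h2
  · linarith
  · nlinarith [mul_pos (by linarith : (0:ℝ) < 2 - t) (by linarith : (0:ℝ) < 1 + a1)]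

lemma hasDerivAt_A (a1 a2 t : ℝ) (h : 1 + a1 * t ≠ 0) :
    HasDerivAt
      (fun s : ℝ => (1 - s) ^ 2 * (1 + (2 + a1) * s + (3 + 2 * a1 + a2) * s ^ 2) / (1 + a1 * s))
      (dA a1 a2 t) t := by
  have h1 : HasDerivAt (fun s : ℝ => (1 - s) ^ 2) ((2:ℕ) * (1 - t) ^ (2 - 1) * (-1)) t :=
    ((hasDerivAt_id' t).const_sub 1).pow 2
  have h2 : HasDerivAt (fun s : ℝ => 1 + (2 + a1) * s + (3 + 2 * a1 + a2) * s ^ 2)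
      ((2 + a1) * 1 + (3 + 2 * a1 + a2) * ((2:ℕ) * t ^ (2 - 1))) t :=
    (((hasDerivAt_id' t).const_mul (2 + a1)).const_add 1).add
      ((hasDerivAt_pow 2 t).const_mul (3 + 2 * a1 + a2))
  have hq : HasDerivAt (fun s : ℝ => 1 + a1 * s) (a1 * 1) t :=
    ((hasDerivAt_id' t).const_mul a1).const_add 1
  have := (h1.mul h2).div hq h
  refine this.congr_deriv ?_
  rw [dA]
  simp only [Pi.mul_apply]
  field_simp
  ring

lemma hasDerivAt_B (a1 a2 t : ℝ) (h : -1 - 2 * a1 + a1 * t ≠ 0) :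
    HasDerivAt
      (fun s : ℝ => (2 - s) ^ 2 * (1 - s) ^ 2 * (3 + a2) / (-1 - 2 * a1 + a1 * s))
      (dB a1 a2 t) t := by
  have h1 : HasDerivAt (fun s : ℝ => (2 - s) ^ 2) ((2:ℕ) * (2 - t) ^ (2 - 1) * (-1)) t :=
    ((hasDerivAt_id' t).const_sub 2).pow 2
  have h2 : HasDerivAt (fun s : ℝ => (1 - s) ^ 2) ((2:ℕ) * (1 - t) ^ (2 - 1) * (-1)) t :=
    ((hasDerivAt_id' t).const_sub 1).pow 2
  have hq : HasDerivAt (fun s : ℝ => -1 - 2 * a1 + a1 * s) (a1 * 1) t :=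
    ((hasDerivAt_id' t).const_mul a1).const_add (-1 - 2 * a1)
  have := (((h1.mul h2).mul_const (3 + a2)).div hq h)
  refine this.congr_deriv ?_
  rw [dB]
  simp only [Pi.mul_apply]
  field_simp
  ring

lemma S41a_neg (a1 a2 t : ℝ) : S41a a1 a2 (-t) = S41a a1 a2 t := by
  simp [S41a, abs_neg]

lemma S41a_eqA (a1 a2 s : ℝ) (h0 : 0 ≤ s) (h1 : s < 1) :
    S41a a1 a2 s =
      (1 - s) ^ 2 * (1 + (2 + a1) * s + (3 + 2 * a1 + a2) * s ^ 2) / (1 + a1 * s) := by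
  simp only [S41a, abs_of_nonneg h0]
  rw [if_pos h1]

lemma S41a_eqB (a1 a2 s : ℝ) (h1 : 1 ≤ s) (h2 : s < 2) :
    S41a a1 a2 s = (2 - s) ^ 2 * (1 - s) ^ 2 * (3 + a2) / (-1 - 2 * a1 + a1 * s) := by
  simp only [S41a, abs_of_nonneg (by linarith : (0:ℝ) ≤ s)]
  rw [if_neg (not_lt.2 h1), if_pos h2]

lemma S41a_eqC (a1 a2 s : ℝ) (h : 2 ≤ s) : S41a a1 a2 s = 0 := by
  simp only [S41a, abs_of_nonneg (by linarith : (0:ℝ) ≤ s)]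
  rw [if_neg (by push_neg; linarith), if_neg (not_lt.2 h)]

lemma S41a_one (a1 a2 : ℝ) : S41a a1 a2 1 = 0 := by
  rw [S41a_eqB a1 a2 1 le_rfl one_lt_two]; norm_num

lemma A_one (a1 a2 : ℝ) :
    (1 - (1:ℝ)) ^ 2 * (1 + (2 + a1) * 1 + (3 + 2 * a1 + a2) * 1 ^ 2) / (1 + a1 * 1) = 0 := by
  norm_num

lemma B_one (a1 a2 : ℝ) :
    (2 - (1:ℝ)) ^ 2 * (1 - 1) ^ 2 * (3 + a2) / (-1 - 2 * a1 + a1 * 1) = 0 := by norm_num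

lemma B_two (a1 a2 : ℝ) :
    (2 - (2:ℝ)) ^ 2 * (1 - 2) ^ 2 * (3 + a2) / (-1 - 2 * a1 + a1 * 2) = 0 := by norm_num

lemma hD0 (a1 a2 : ℝ) (ha1 : -1 < a1) (t : ℝ) (ht : 0 ≤ t) :
    HasDerivAt (S41a a1 a2) (D0 a1 a2 t) t := by
  rcases eq_or_lt_of_le ht with rfl | ht0
  · -- t = 0
    have hA0 := hasDerivAt_A a1 a2 0 (by norm_num)
    have hIci : HasDerivWithinAt (S41a a1 a2) (dA a1 a2 0) (Ici 0) 0 := by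
      refine hA0.hasDerivWithinAt.congr_of_eventuallyEq ?_ ?_
      · filter_upwards [Ico_mem_nhdsGE_of_mem (⟨le_refl (0:ℝ), one_pos⟩ : (0:ℝ) ∈ Ico 0 1)]
          with s hs
        exact S41a_eqA a1 a2 s hs.1 hs.2
      · exact S41a_eqA a1 a2 0 le_rfl one_pos
    rw [dA_zero] at hIci
    have hIci' : HasDerivWithinAt (S41a a1 a2) 0 (Ici 0) (-(0:ℝ)) := by
      rwa [neg_zero]
    have hneg : HasDerivWithinAt (fun s : ℝ => -s) (-1) (Iic (0:ℝ)) 0 :=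
      ((hasDerivAt_id' (0:ℝ)).neg).hasDerivWithinAt
    have hmaps : MapsTo (fun s : ℝ => -s) (Iic 0) (Ici 0) := by
      intro s hs
      simpa using hs
    have hcomp := HasDerivWithinAt.comp (0:ℝ) hIci' hneg hmaps
    have hfn : (S41a a1 a2 ∘ fun s : ℝ => -s) = S41a a1 a2 :=
      funext fun s => S41a_neg a1 a2 s
    rw [hfn] at hcomp
    have hIic : HasDerivWithinAt (S41a a1 a2) 0 (Iic 0) 0 := by simpa using hcomp
    have := hIic.union hIci
    rw [Iic_union_Ici] at this
    have hfinal := hasDerivWithinAt_univ.mp this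
    have : D0 a1 a2 0 = 0 := by simp [D0, dA_zero]
    rwa [this]
  rcases lt_trichotomy t 1 with h1 | rfl | h1
  · -- 0 < t < 1
    have hq : (1 + a1 * t) ≠ 0 := ne_of_gt (qA_pos a1 t ha1 ht h1.le)
    have key := hasDerivAt_A a1 a2 t hq
    have heq : S41a a1 a2 =ᶠ[nhds t]
        fun s => (1 - s) ^ 2 * (1 + (2 + a1) * s + (3 + 2 * a1 + a2) * s ^ 2) / (1 + a1 * s) := by
      filter_upwards [Ioo_mem_nhds ht0 h1] with s hs
      exact S41a_eqA a1 a2 s hs.1.le hs.2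
    have := key.congr_of_eventuallyEq heq
    have hD : D0 a1 a2 t = dA a1 a2 t := by simp [D0, if_pos h1]
    rwa [hD]
  · -- t = 1
    have hqA : (1 + a1 * 1) ≠ 0 := ne_of_gt (qA_pos a1 1 ha1 zero_le_one le_rfl)
    have hqB : (-1 - 2 * a1 + a1 * 1) ≠ 0 := ne_of_lt (qB_neg a1 1 ha1 le_rfl one_le_two)
    have hIic : HasDerivWithinAt (S41a a1 a2) 0 (Iic 1) 1 := by
      have hA1 := (hasDerivAt_A a1 a2 1 hqA).hasDerivWithinAt (s := Iic 1)
      rw [dA_one] at hA1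
      refine hA1.congr_of_eventuallyEq ?_ ?_
      · filter_upwards [Ioc_mem_nhdsLE_of_mem (⟨one_pos, le_refl (1:ℝ)⟩ : (1:ℝ) ∈ Ioc 0 1)]
          with s hs
        rcases eq_or_lt_of_le hs.2 with rfl | hlt
        · rw [S41a_one, A_one]
        · exact S41a_eqA a1 a2 s hs.1.le hlt
      · rw [S41a_one, A_one]
    have hIci : HasDerivWithinAt (S41a a1 a2) 0 (Ici 1) 1 := by
      have hB1 := (hasDerivAt_B a1 a2 1 hqB).hasDerivWithinAt (s := Ici 1)
      rw [dB_one] at hB1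
      refine hB1.congr_of_eventuallyEq ?_ ?_
      · filter_upwards [Ico_mem_nhdsGE_of_mem (⟨le_refl (1:ℝ), one_lt_two⟩ : (1:ℝ) ∈ Ico 1 2)]
          with s hs
        exact S41a_eqB a1 a2 s hs.1 hs.2
      · rw [S41a_one, B_one]
    have := hIic.union hIci
    rw [Iic_union_Ici] at this
    have hfinal := hasDerivWithinAt_univ.mp this
    have hD : D0 a1 a2 1 = 0 := by
      simp [D0, dB_one]
    rwa [hD]
  rcases lt_trichotomy t 2 with h2 | rfl | h2
  · -- 1 < t < 2
    have hq : (-1 - 2 * a1 + a1 * t) ≠ 0 := ne_of_lt (qB_neg a1 t ha1 h1.le h2.le)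
    have key := hasDerivAt_B a1 a2 t hq
    have heq : S41a a1 a2 =ᶠ[nhds t]
        fun s => (2 - s) ^ 2 * (1 - s) ^ 2 * (3 + a2) / (-1 - 2 * a1 + a1 * s) := by
      filter_upwards [Ioo_mem_nhds h1 h2] with s hs
      exact S41a_eqB a1 a2 s hs.1.le hs.2
    have := key.congr_of_eventuallyEq heq
    have hD : D0 a1 a2 t = dB a1 a2 t := by
      simp [D0, if_neg (not_lt.2 h1.le), if_pos h2]
    rwa [hD]
  · -- t = 2
    have hqB : (-1 - 2 * a1 + a1 * 2) ≠ 0 := ne_of_lt (qB_neg a1 2 ha1 one_le_two le_rfl)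
    have hIic : HasDerivWithinAt (S41a a1 a2) 0 (Iic 2) 2 := by
      have hB2 := (hasDerivAt_B a1 a2 2 hqB).hasDerivWithinAt (s := Iic 2)
      rw [dB_two] at hB2
      refine hB2.congr_of_eventuallyEq ?_ ?_
      · filter_upwards [Ioc_mem_nhdsLE_of_mem (⟨one_lt_two, le_refl (2:ℝ)⟩ : (2:ℝ) ∈ Ioc 1 2)]
          with s hs
        rcases eq_or_lt_of_le hs.2 with rfl | hlt
        · rw [S41a_eqC a1 a2 2 le_rfl, B_two]
        · exact S41a_eqB a1 a2 s hs.1.le hlt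
      · rw [S41a_eqC a1 a2 2 le_rfl, B_two]
    have hIci : HasDerivWithinAt (S41a a1 a2) 0 (Ici 2) 2 := by
      have hc : HasDerivWithinAt (fun _ : ℝ => (0:ℝ)) 0 (Ici 2) 2 :=
        (hasDerivAt_const (2:ℝ) (0:ℝ)).hasDerivWithinAt
      refine hc.congr_of_eventuallyEq ?_ ?_
      · filter_upwards [self_mem_nhdsWithin] with s hs
        exact S41a_eqC a1 a2 s hs
      · exact S41a_eqC a1 a2 2 le_rfl
    have := hIic.union hIci
    rw [Iic_union_Ici] at this
    have hfinal := hasDerivWithinAt_univ.mp this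
    have hD : D0 a1 a2 2 = 0 := by norm_num [D0]
    rwa [hD]
  · -- t > 2
    have hc : HasDerivAt (fun _ : ℝ => (0:ℝ)) 0 t := hasDerivAt_const t 0
    have heq : S41a a1 a2 =ᶠ[nhds t] fun _ => (0:ℝ) := by
      filter_upwards [Ioi_mem_nhds h2] with s hs
      exact S41a_eqC a1 a2 s (le_of_lt hs)
    have := hc.congr_of_eventuallyEq heq
    have hD : D0 a1 a2 t = 0 := by
      simp [D0, if_neg (not_lt.2 (by linarith : (1:ℝ) ≤ t)), if_neg (not_lt.2 h2.le)]
    rwa [hD]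

lemma hD_all (a1 a2 : ℝ) (ha1 : -1 < a1) (t : ℝ) :
    HasDerivAt (S41a a1 a2) (Dfun a1 a2 t) t := by
  rcases lt_or_ge t 0 with h | h
  · have h0 := hD0 a1 a2 ha1 (-t) (by linarith)
    have hneg : HasDerivAt (fun s : ℝ => -s) (-1) t := (hasDerivAt_id' t).neg
    have hcomp := HasDerivAt.comp t h0 hneg
    have hfn : (S41a a1 a2 ∘ fun s : ℝ => -s) = S41a a1 a2 :=
      funext fun s => S41a_neg a1 a2 s
    rw [hfn] at hcomp
    have hD : Dfun a1 a2 t = D0 a1 a2 (-t) * (-1) := by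
      simp [Dfun, if_pos h]
    rwa [hD]
  · have := hD0 a1 a2 ha1 t h
    have hD : Dfun a1 a2 t = D0 a1 a2 t := by simp [Dfun, not_lt.2 h]
    rwa [hD]

lemma contA (a1 a2 t : ℝ) (h : 1 + a1 * t ≠ 0) : ContinuousAt (fun x => dA a1 a2 x) t := by
  simp only [dA]
  refine ContinuousAt.sub (ContinuousAt.div ?_ ?_ h)
    (ContinuousAt.div ?_ ?_ (pow_ne_zero 2 h)) <;> fun_prop

lemma contB (a1 a2 t : ℝ) (h : -1 - 2 * a1 + a1 * t ≠ 0) :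
    ContinuousAt (fun x => dB a1 a2 x) t := by
  simp only [dB]
  refine ContinuousAt.sub (ContinuousAt.div ?_ ?_ h)
    (ContinuousAt.div ?_ ?_ (pow_ne_zero 2 h)) <;> fun_prop

lemma contD0 (a1 a2 : ℝ) (ha1 : -1 < a1) (t : ℝ) (ht : 0 ≤ t) :
    ContinuousAt (D0 a1 a2) t := by
  rcases lt_trichotomy t 1 with h1 | rfl | h1
  · -- t < 1
    have hq : (1 + a1 * t) ≠ 0 := ne_of_gt (qA_pos a1 t ha1 ht h1.le)
    refine (contA a1 a2 t hq).congr ?_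
    filter_upwards [Iio_mem_nhds h1] with s hs
    rw [mem_Iio] at hs
    simp [D0, hs]
  · -- t = 1
    have hqA : (1 + a1 * 1) ≠ 0 := ne_of_gt (qA_pos a1 1 ha1 zero_le_one le_rfl)
    have hqB : (-1 - 2 * a1 + a1 * 1) ≠ 0 := ne_of_lt (qB_neg a1 1 ha1 le_rfl one_le_two)
    have hIic : ContinuousWithinAt (D0 a1 a2) (Iic 1) 1 := by
      refine ((contA a1 a2 1 hqA).continuousWithinAt).congr_of_eventuallyEq ?_ ?_
      · filter_upwards [self_mem_nhdsWithin] with s hs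
        rcases eq_or_lt_of_le (mem_Iic.1 hs) with rfl | hlt
        · simp [D0, dA_one, dB_one]
        · simp [D0, if_pos hlt]
      · simp [D0, dA_one, dB_one]
    have hIci : ContinuousWithinAt (D0 a1 a2) (Ici 1) 1 := by
      refine ((contB a1 a2 1 hqB).continuousWithinAt).congr_of_eventuallyEq ?_ ?_
      · filter_upwards [Ico_mem_nhdsGE_of_mem (⟨le_refl (1:ℝ), one_lt_two⟩ : (1:ℝ) ∈ Ico 1 2)]
          with s hs
        simp [D0, if_neg (not_lt.2 hs.1), if_pos hs.2]
      · simp [D0]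
    have := hIic.union hIci
    rwa [Iic_union_Ici, continuousWithinAt_univ] at this
  rcases lt_trichotomy t 2 with h2 | rfl | h2
  · -- 1 < t < 2
    have hq : (-1 - 2 * a1 + a1 * t) ≠ 0 := ne_of_lt (qB_neg a1 t ha1 h1.le h2.le)
    refine (contB a1 a2 t hq).congr ?_
    filter_upwards [Ioo_mem_nhds h1 h2] with s hs
    simp [D0, if_neg (not_lt.2 hs.1.le), if_pos hs.2]
  · -- t = 2
    have hqB : (-1 - 2 * a1 + a1 * 2) ≠ 0 := ne_of_lt (qB_neg a1 2 ha1 one_le_two le_rfl)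
    have hIic : ContinuousWithinAt (D0 a1 a2) (Iic 2) 2 := by
      refine ((contB a1 a2 2 hqB).continuousWithinAt).congr_of_eventuallyEq ?_ ?_
      · filter_upwards [Ioc_mem_nhdsLE_of_mem (⟨one_lt_two, le_refl (2:ℝ)⟩ : (2:ℝ) ∈ Ioc 1 2)]
          with s hs
        rcases eq_or_lt_of_le hs.2 with rfl | hlt
        · norm_num [D0, dB_two]
        · simp [D0, if_neg (not_lt.2 hs.1.le), if_pos hlt]
      · norm_num [D0, dB_two]
    have hIci : ContinuousWithinAt (D0 a1 a2) (Ici 2) 2 := by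
      refine (continuousWithinAt_const (b := (0:ℝ))).congr_of_eventuallyEq ?_ ?_
      · filter_upwards [self_mem_nhdsWithin] with s hs
        have hs2 : (2:ℝ) ≤ s := hs
        simp [D0, if_neg (not_lt.2 (by linarith : (1:ℝ) ≤ s)), if_neg (not_lt.2 hs2)]
      · norm_num [D0]
    have := hIic.union hIci
    rwa [Iic_union_Ici, continuousWithinAt_univ] at this
  · -- t > 2
    refine (continuousAt_const (y := (0:ℝ))).congr ?_
    filter_upwards [Ioi_mem_nhds h2] with s hs
    have hs2 : (2:ℝ) < s := hs
    simp [D0, if_neg (not_lt.2 (by linarith : (1:ℝ) ≤ s)), if_neg (not_lt.2 hs2.le)]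

lemma contDfun (a1 a2 : ℝ) (ha1 : -1 < a1) : Continuous (Dfun a1 a2) := by
  rw [continuous_iff_continuousAt]
  intro t
  rcases lt_trichotomy t 0 with h | rfl | h
  · have hc : ContinuousAt (fun s : ℝ => -(D0 a1 a2 (-s))) t :=
      (((contD0 a1 a2 ha1 (-t) (by linarith)).comp
        (continuous_neg.continuousAt : ContinuousAt (fun s : ℝ => -s) t))).neg
    refine hc.congr ?_
    filter_upwards [Iio_mem_nhds h] with s hs
    rw [mem_Iio] at hs
    simp [Dfun, hs]
  · have hIci : ContinuousWithinAt (Dfun a1 a2) (Ici 0) 0 := by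
      refine ((contD0 a1 a2 ha1 0 le_rfl).continuousWithinAt).congr_of_eventuallyEq ?_ ?_
      · filter_upwards [self_mem_nhdsWithin] with s hs
        have : ¬ s < 0 := not_lt.2 hs
        simp [Dfun, this]
      · simp [Dfun]
    have hIic : ContinuousWithinAt (Dfun a1 a2) (Iic 0) 0 := by
      have hc : ContinuousAt (fun s : ℝ => -(D0 a1 a2 (-s))) 0 := by
        have h0 : ContinuousAt (D0 a1 a2) (-(0:ℝ)) := by
          rw [neg_zero]; exact contD0 a1 a2 ha1 0 le_rfl
        exact (h0.comp (continuous_neg.continuousAt : ContinuousAt (fun s : ℝ => -s) 0)).neg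
      refine (hc.continuousWithinAt).congr_of_eventuallyEq ?_ ?_
      · filter_upwards [self_mem_nhdsWithin] with s hs
        rcases eq_or_lt_of_le (mem_Iic.1 hs) with rfl | hlt
        · simp [Dfun, D0, dA_zero]
        · simp [Dfun, if_pos hlt]
      · simp [Dfun, D0, dA_zero]
    have := hIic.union hIci
    rwa [Iic_union_Ici, continuousWithinAt_univ] at this
  · refine (contD0 a1 a2 ha1 t h.le).congr ?_
    filter_upwards [Ioi_mem_nhds h] with s hs
    have : ¬ s < 0 := not_lt.2 (le_of_lt hs)
    simp [Dfun, this]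

theorem S41a_C1 (a1 a2 : ℝ) (ha1 : -1 < a1) :
    ContDiff ℝ 1 (S41a a1 a2) ∧ deriv (S41a a1 a2) 1 = 0 := by
  have hD := hD_all a1 a2 ha1
  have hderiv : deriv (S41a a1 a2) = Dfun a1 a2 := funext fun t => (hD t).deriv
  constructor
  · rw [contDiff_one_iff_deriv]
    refine ⟨fun t => (hD t).differentiableAt, ?_⟩
    rw [hderiv]
    exact contDfun a1 a2 ha1
  · rw [hderiv]
    norm_num [Dfun, D0, dB_one]
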